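/- Suppose L maps Cauchy sequences (in the sup norm) to Cauchy sequences. Then F is not a closed operator; that is, there exists a sequence (f_n) in Lip(I×J) and functions f, k ∈ C(I×J) with f_n → f and F(f_n) → k in sup norm, such that f ∉ Lip(I×J) or F(f) ≠ k. -/

import Mathlib

open Set Filter
open Topology

/-- The sup norm of `φ` over the set `S`. -/
noncomputable def supOn (S : Set (ℝ × ℝ)) (φ : ℝ × ℝ → ℝ) : ℝ :=
  ⨆ p : S, |φ (p : ℝ × ℝ)|

lemma supOn_le {S : Set (ℝ × ℝ)} {g : ℝ × ℝ → ℝ} {C : ℝ} (hC : 0 ≤ C)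
    (h : ∀ p ∈ S, |g p| ≤ C) : supOn S g ≤ C :=
  Real.iSup_le (fun p => h p p.2) hC

lemma le_supOn {S : Set (ℝ × ℝ)} (hS : IsCompact S) {g : ℝ × ℝ → ℝ}
    (hg : ContinuousOn g S) {p : ℝ × ℝ} (hp : p ∈ S) : |g p| ≤ supOn S g := by
  have hbd : BddAbove (Set.range fun q : S => |g (q : ℝ × ℝ)|) := by
    have := (hS.image_of_continuousOn hg.abs).bddAbove
    rwa [Set.image_eq_range] at this
  exact le_ciSup hbd ⟨p, hp⟩

lemma sqrt_lipschitzOn (ε : ℝ) (hε : 0 < ε) :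
    LipschitzOnWith (Real.toNNReal (1 / Real.sqrt ε)) Real.sqrt (Ici ε) := by
  rw [lipschitzOnWith_iff_dist_le_mul]
  have key : ∀ u v : ℝ, ε ≤ u → ε ≤ v → u ≤ v →
      Real.sqrt v - Real.sqrt u ≤ (1 / Real.sqrt ε) * (v - u) := by
    intro u v hu hv huv
    have hsε : 0 < Real.sqrt ε := Real.sqrt_pos.mpr hε
    have h1 : Real.sqrt ε ≤ Real.sqrt u := Real.sqrt_le_sqrt hu
    have h2 : Real.sqrt u ≤ Real.sqrt v := Real.sqrt_le_sqrt huv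
    have hu2 : Real.sqrt u ^ 2 = u := Real.sq_sqrt (le_trans hε.le hu)
    have hv2 : Real.sqrt v ^ 2 = v := Real.sq_sqrt (le_trans hε.le hv)
    rw [div_mul_eq_mul_div, one_mul, le_div_iff₀ hsε]
    nlinarith [mul_le_mul_of_nonneg_left (le_trans h1 h2) (sub_nonneg.mpr h2)]
  intro u hu v hv
  simp only [Real.dist_eq]
  rw [Real.coe_toNNReal _ (by positivity)]
  rcases le_total u v with h | h
  · rw [abs_of_nonpos (by nlinarith [Real.sqrt_le_sqrt h]), abs_of_nonpos (by linarith)]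
    have := key u v hu hv h
    linarith
  · rw [abs_of_nonneg (by nlinarith [Real.sqrt_le_sqrt h]), abs_of_nonneg (by linarith)]
    have := key v u hv hu h
    linarith


/-- If the parameter map `L : Lip(I×J) → Lip(I×J)` maps Cauchy
sequences (in sup norm) to Cauchy sequences, then the α-fractal operator `F`
(satisfying the relative Lipschitz estimate) is not a closed operator: there
exist Lipschitz functions `fₙ` and continuous `f, k` with `fₙ → f` and
`F fₙ → k` uniformly, yet `f` is not Lipschitz or `F f ≠ k` on `I×J`. -/
theorem fractal_operator_not_closed
    (a b c d : ℝ) (hab : a < b) (hcd : c < d)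
    (s : ℝ) (hs0 : 0 ≤ s) (hs1 : s < 1)
    (F L : (ℝ × ℝ → ℝ) → (ℝ × ℝ → ℝ))
    (hLmaps : ∀ φ : ℝ × ℝ → ℝ, (∃ M : NNReal, LipschitzOnWith M φ ((Icc a b) ×ˢ (Icc c d))) →
      ∃ M : NNReal, LipschitzOnWith M (L φ) ((Icc a b) ×ˢ (Icc c d)))
    (hLcauchy : ∀ φ : ℕ → ℝ × ℝ → ℝ,
      (∀ n, ∃ M : NNReal, LipschitzOnWith M (φ n) ((Icc a b) ×ˢ (Icc c d))) →
      UniformCauchySeqOn φ atTop ((Icc a b) ×ˢ (Icc c d)) →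
      UniformCauchySeqOn (fun n => L (φ n)) atTop ((Icc a b) ×ˢ (Icc c d)))
    (hFmaps : ∀ φ : ℝ × ℝ → ℝ, (∃ M : NNReal, LipschitzOnWith M φ ((Icc a b) ×ˢ (Icc c d))) →
      ContinuousOn (F φ) ((Icc a b) ×ˢ (Icc c d)))
    (hF : ∀ φ ψ : ℝ × ℝ → ℝ,
      (∃ M : NNReal, LipschitzOnWith M φ ((Icc a b) ×ˢ (Icc c d))) →
      (∃ M : NNReal, LipschitzOnWith M ψ ((Icc a b) ×ˢ (Icc c d))) →
      supOn ((Icc a b) ×ˢ (Icc c d)) (fun p => F φ p - F ψ p) ≤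
        (1 / (1 - s)) * supOn ((Icc a b) ×ˢ (Icc c d)) (fun p => φ p - ψ p) +
        (s / (1 - s)) * supOn ((Icc a b) ×ˢ (Icc c d)) (fun p => L φ p - L ψ p)) :
    ∃ (fseq : ℕ → ℝ × ℝ → ℝ) (f k : ℝ × ℝ → ℝ),
      (∀ n, ∃ M : NNReal, LipschitzOnWith M (fseq n) ((Icc a b) ×ˢ (Icc c d))) ∧
      ContinuousOn f ((Icc a b) ×ˢ (Icc c d)) ∧
      ContinuousOn k ((Icc a b) ×ˢ (Icc c d)) ∧
      TendstoUniformlyOn fseq f atTop ((Icc a b) ×ˢ (Icc c d)) ∧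
      TendstoUniformlyOn (fun n => F (fseq n)) k atTop ((Icc a b) ×ˢ (Icc c d)) ∧
      (¬ (∃ M : NNReal, LipschitzOnWith M f ((Icc a b) ×ˢ (Icc c d))) ∨
        ¬ EqOn (F f) k ((Icc a b) ×ˢ (Icc c d))) := by
  set S : Set (ℝ × ℝ) := (Icc a b) ×ˢ (Icc c d) with hSdef
  have hScomp : IsCompact S := isCompact_Icc.prod isCompact_Icc
  have h1s : 0 < 1 - s := by linarith
  set f : ℝ × ℝ → ℝ := fun p => Real.sqrt (p.1 - a) with hfdef
  set fseq : ℕ → ℝ × ℝ → ℝ := fun n p => Real.sqrt (p.1 - a + 1/(n+1)) with hfseqdef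
  -- each fseq n is Lipschitz on S
  have hLip : ∀ n, ∃ M : NNReal, LipschitzOnWith M (fseq n) S := by
    intro n
    have hε : (0:ℝ) < 1/(n+1) := by positivity
    have hg : LipschitzWith 1 (fun p : ℝ × ℝ => p.1 - a + 1/(n+1)) := by
      apply LipschitzWith.of_dist_le_mul
      intro p q
      rw [NNReal.coe_one, one_mul, Real.dist_eq, Prod.dist_eq]
      have he : p.1 - a + 1/(n+1) - (q.1 - a + 1/(n+1)) = p.1 - q.1 := by ring
      rw [he]
      calc |p.1 - q.1| = dist p.1 q.1 := (Real.dist_eq _ _).symm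
        _ ≤ max (dist p.1 q.1) (dist p.2 q.2) := le_max_left _ _
    have hmaps : MapsTo (fun p : ℝ × ℝ => p.1 - a + 1/(n+1)) S (Ici (1/(n+1))) := by
      intro p hp
      have := hp.1.1
      simp only [mem_Ici]
      linarith
    exact ⟨_, (sqrt_lipschitzOn _ hε).comp hg.lipschitzOnWith hmaps⟩
  -- uniform convergence fseq → f
  have hdist : ∀ n : ℕ, ∀ p ∈ S, dist (f p) (fseq n p) ≤ Real.sqrt (1/(n+1)) := by
    intro n p hp
    have ht : (0:ℝ) ≤ p.1 - a := by linarith [hp.1.1]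
    have hε : (0:ℝ) ≤ 1/(n+1) := by positivity
    have h1 : Real.sqrt (p.1 - a) ≤ Real.sqrt (p.1 - a + 1/(n+1)) :=
      Real.sqrt_le_sqrt (by linarith)
    have h2 : Real.sqrt (p.1 - a + 1/(n+1)) ≤ Real.sqrt (p.1 - a) + Real.sqrt (1/(n+1)) := by
      rw [show Real.sqrt (p.1 - a) + Real.sqrt (1/(n+1))
          = Real.sqrt ((Real.sqrt (p.1 - a) + Real.sqrt (1/(n+1)))^2) from
        (Real.sqrt_sq (by positivity)).symm]
      apply Real.sqrt_le_sqrt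
      have e1 := Real.sq_sqrt ht
      have e2 := Real.sq_sqrt hε
      nlinarith [Real.sqrt_nonneg (p.1 - a), Real.sqrt_nonneg ((1:ℝ)/(n+1))]
    rw [Real.dist_eq, abs_of_nonpos (by simp only [hfdef, hfseqdef]; linarith)]
    simp only [hfdef, hfseqdef] at h2 ⊢
    linarith
  have htend0 : Tendsto (fun n : ℕ => Real.sqrt (1/(n+1))) atTop (𝓝 0) := by
    have h := (Real.continuous_sqrt.tendsto 0).comp tendsto_one_div_add_atTop_nhds_zero_nat
    rw [Real.sqrt_zero] at h
    exact h
  have hfu : TendstoUniformlyOn fseq f atTop S := by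
    rw [Metric.tendstoUniformlyOn_iff]
    intro ε hε
    filter_upwards [htend0.eventually_lt_const hε] with n hn p hp
    exact lt_of_le_of_lt (hdist n p hp) hn
  have hcau : UniformCauchySeqOn fseq atTop S := hfu.uniformCauchySeqOn
  have hLcau := hLcauchy fseq hLip hcau
  have hcontF : ∀ n, ContinuousOn (F (fseq n)) S := fun n => hFmaps _ (hLip n)
  -- F ∘ fseq is uniformly Cauchy
  have hFcau : UniformCauchySeqOn (fun n => F (fseq n)) atTop S := by
    rw [Metric.uniformCauchySeqOn_iff]
    intro ε hε
    set δ := ε * (1 - s) / 4 with hδdef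
    have hδ : 0 < δ := by positivity
    obtain ⟨N₁, hN₁⟩ := Metric.uniformCauchySeqOn_iff.mp hcau δ hδ
    obtain ⟨N₂, hN₂⟩ := Metric.uniformCauchySeqOn_iff.mp hLcau δ hδ
    refine ⟨max N₁ N₂, fun m hm n hn x hx => ?_⟩
    have hm1 : N₁ ≤ m := le_trans (le_max_left _ _) hm
    have hn1 : N₁ ≤ n := le_trans (le_max_left _ _) hn
    have hm2 : N₂ ≤ m := le_trans (le_max_right _ _) hm
    have hn2 : N₂ ≤ n := le_trans (le_max_right _ _) hn
    have hsup1 : supOn S (fun p => fseq m p - fseq n p) ≤ δ := by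
      apply supOn_le hδ.le
      intro p hp
      have := hN₁ m hm1 n hn1 p hp
      rw [Real.dist_eq] at this
      exact this.le
    have hsup2 : supOn S (fun p => L (fseq m) p - L (fseq n) p) ≤ δ := by
      apply supOn_le hδ.le
      intro p hp
      have := hN₂ m hm2 n hn2 p hp
      rw [Real.dist_eq] at this
      exact this.le
    have hpt : dist (F (fseq m) x) (F (fseq n) x)
        ≤ supOn S (fun p => F (fseq m) p - F (fseq n) p) := by
      rw [Real.dist_eq]
      exact le_supOn hScomp ((hcontF m).sub (hcontF n)) hx
    have hcoef1 : (0:ℝ) ≤ 1/(1-s) := by positivity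
    have hcoef2 : (0:ℝ) ≤ s/(1-s) := by positivity
    have hFsup := hF (fseq m) (fseq n) (hLip m) (hLip n)
    have hstep : (1/(1-s)) * supOn S (fun p => fseq m p - fseq n p)
        + (s/(1-s)) * supOn S (fun p => L (fseq m) p - L (fseq n) p)
        ≤ (1/(1-s)) * δ + (s/(1-s)) * δ :=
      add_le_add (mul_le_mul_of_nonneg_left hsup1 hcoef1)
        (mul_le_mul_of_nonneg_left hsup2 hcoef2)
    have harith : (1/(1-s)) * δ + (s/(1-s)) * δ < ε := by
      have e1 : (1/(1-s)) * δ = ε/4 := by rw [hδdef]; field_simp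
      have e2 : (s/(1-s)) * δ = s*ε/4 := by rw [hδdef]; field_simp
      rw [e1, e2]
      nlinarith
    exact lt_of_le_of_lt (hpt.trans (hFsup.trans hstep)) harith
  -- the uniform limit k
  set k : ℝ × ℝ → ℝ := fun x => limUnder atTop (fun n => F (fseq n) x) with hkdef
  have hklim : ∀ x ∈ S, Tendsto (fun n => F (fseq n) x) atTop (𝓝 (k x)) := by
    intro x hx
    exact CauchySeq.tendsto_limUnder (hFcau.cauchy_map hx)
  have hFk : TendstoUniformlyOn (fun n => F (fseq n)) k atTop S :=
    hFcau.tendstoUniformlyOn_of_tendsto hklim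
  have hkcont : ContinuousOn k S := hFk.continuousOn (Frequently.of_forall hcontF)
  have hfcont : ContinuousOn f S :=
    (Real.continuous_sqrt.comp (continuous_fst.sub continuous_const)).continuousOn
  -- f is not Lipschitz on S
  have hnot : ¬ (∃ M : NNReal, LipschitzOnWith M f S) := by
    rintro ⟨M, hM⟩
    have hM0 : (0:ℝ) ≤ M := M.2
    set t : ℝ := min (b - a) ((1 / (2 * ((M:ℝ) + 1)))^2) with htdef
    have ht0 : 0 < t := lt_min (by linarith) (by positivity)
    have htba : t ≤ b - a := min_le_left _ _
    have hp : ((a + t, c) : ℝ × ℝ) ∈ S :=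
      ⟨⟨show a ≤ a + t by linarith, show a + t ≤ b by linarith⟩, ⟨le_refl c, hcd.le⟩⟩
    have hq : ((a, c) : ℝ × ℝ) ∈ S := ⟨⟨le_refl a, hab.le⟩, ⟨le_refl c, hcd.le⟩⟩
    have hd := hM.dist_le_mul _ hp _ hq
    have e1 : f (a + t, c) = Real.sqrt t := by simp only [hfdef]; norm_num
    have e2 : f (a, c) = 0 := by simp [hfdef]
    have edist1 : dist ((a + t, c) : ℝ × ℝ) ((a, c) : ℝ × ℝ) = t := by
      rw [Prod.dist_eq]
      simp [Real.dist_eq, add_sub_cancel_left, abs_of_nonneg ht0.le, max_eq_left ht0.le]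
    have edist2 : dist (f (a + t, c)) (f (a, c)) = Real.sqrt t := by
      rw [e1, e2, Real.dist_eq, sub_zero, abs_of_nonneg (Real.sqrt_nonneg t)]
    rw [edist1, edist2] at hd
    have hst : 0 < Real.sqrt t := Real.sqrt_pos.mpr ht0
    have hst2 : Real.sqrt t ≤ 1 / (2 * ((M:ℝ) + 1)) := by
      calc Real.sqrt t ≤ Real.sqrt ((1 / (2 * ((M:ℝ)+1)))^2) :=
            Real.sqrt_le_sqrt (min_le_right _ _)
        _ = 1 / (2 * ((M:ℝ)+1)) := Real.sqrt_sq (by positivity)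
    have hd' : Real.sqrt t ≤ (M:ℝ) * (Real.sqrt t * Real.sqrt t) := by
      rw [Real.mul_self_sqrt ht0.le]; exact hd
    have h1M : 1 ≤ (M:ℝ) * Real.sqrt t := by
      by_contra h
      push_neg at h
      nlinarith [mul_lt_mul_of_pos_right h hst]
    rw [le_div_iff₀ (by positivity : (0:ℝ) < 2 * ((M:ℝ) + 1))] at hst2
    nlinarith [h1M, hst2, hst]
  exact ⟨fseq, f, k, hLip, hfcont, hkcont, hfu, hFk, Or.inl hnot⟩
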